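/- Every surjective group homomorphism from the free group on two generators to itself is an isomorphism. -/

import Mathlib

open Classical in
lemma exists_perm_of_partial {β : Type*} [Fintype β] [DecidableEq β]
    (p : β → Option β) (hp : ∀ x y z, p x = some z → p y = some z → x = y) :
    ∃ σ : Equiv.Perm β, ∀ x y, p x = some y → σ x = y := by
  classical
  set S : Set β := {x | (p x).isSome} with hS
  have hf : Function.Injective (fun x : S => (p x).get x.2) := by
    rintro ⟨x, hx⟩ ⟨y, hy⟩ h
    simp only at h
    have hx' : p x = some ((p x).get hx) := (Option.some_get hx).symm
    have hy' : p y = some ((p y).get hy) := (Option.some_get hy).symm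
    exact Subtype.ext (hp x y _ hx' (h ▸ hy'))
  set T : Set β := Set.range (fun x : S => (p x).get x.2) with hT
  let e1 : S ≃ T := Equiv.ofInjective _ hf
  have e2 : (Sᶜ : Set β) ≃ (Tᶜ : Set β) := by
    apply Fintype.equivOfCardEq
    rw [Fintype.card_compl_set, Fintype.card_compl_set, Fintype.card_congr e1]
  refine ⟨((Equiv.Set.sumCompl S).symm.trans ((e1.sumCongr e2).trans
    (Equiv.Set.sumCompl T))), ?_⟩
  intro x y hxy
  have hxS : x ∈ S := by simp [hS, hxy]
  simp only [Equiv.trans_apply, Equiv.Set.sumCompl_symm_apply_of_mem hxS,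
    Equiv.sumCongr_apply, Sum.map_inl, Equiv.Set.sumCompl_apply_inl]
  show ((Equiv.ofInjective _ hf ⟨x, hxS⟩ : T) : β) = y
  rw [Equiv.ofInjective_apply]
  simp [hxy]

lemma toWord_no_cancel {α : Type*} [DecidableEq α] (g : FreeGroup α) {i : ℕ} {x : α} {b : Bool}
    (h1 : g.toWord[i]? = some (x, b)) (h2 : g.toWord[i+1]? = some (x, !b)) : False := by
  set w := g.toWord with hw
  obtain ⟨hi1, he1⟩ := List.getElem?_eq_some_iff.mp h1
  obtain ⟨hi2, he2⟩ := List.getElem?_eq_some_iff.mp h2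
  have hdrop : w.drop i = (x, b) :: (x, !b) :: w.drop (i+2) := by
    rw [List.drop_eq_getElem_cons hi1, he1, List.drop_eq_getElem_cons hi2, he2]
  have hsplit : w = w.take i ++ (x, b) :: (x, !b) :: w.drop (i+2) := by
    rw [← hdrop, List.take_append_drop]
  have hred : FreeGroup.reduce w = w := g.reduce_toWord
  exact FreeGroup.reduce.not (by rw [hred, ← hsplit])

/-- Residual finiteness of free groups over a decidable type. -/
lemma freeGroup_residually_finite {α : Type*} [DecidableEq α]
    (g : FreeGroup α) (hg : g ≠ 1) :
    ∃ (m : ℕ) (φ : FreeGroup α →* Equiv.Perm (Fin m)), φ g ≠ 1 := by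
  classical
  set w := g.toWord with hwdef
  set n := w.length with hndef
  have hn : 0 < n := by
    rw [hndef, List.length_pos_iff]
    exact fun h => hg (FreeGroup.toWord_eq_nil_iff.mp h)
  -- the partial maps
  set p : α → Fin (n+1) → Option (Fin (n+1)) := fun a k =>
    if h : k.val < n ∧ w[n-1-k.val]? = some (a, true) then some ⟨k.val+1, by omega⟩
    else if w[n-k.val]? = some (a, false) then some ⟨k.val-1, by omega⟩
    else none with hpdef
  -- characterization of p
  have hchar : ∀ a k z, p a k = some z →
      (k.val < n ∧ w[n-1-k.val]? = some (a, true) ∧ z.val = k.val+1) ∨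
      (w[n-k.val]? = some (a, false) ∧ z.val = k.val-1 ∧ 1 ≤ k.val ∧
        ¬(k.val < n ∧ w[n-1-k.val]? = some (a, true))) := by
    intro a k z hz
    rw [hpdef] at hz
    simp only at hz
    split_ifs at hz with h1 h2
    · exact Or.inl ⟨h1.1, h1.2, by rw [← Option.some_inj.mp hz]⟩
    · have hk1 : 1 ≤ k.val := by
        obtain ⟨hlt, -⟩ := List.getElem?_eq_some_iff.mp h2
        rw [← hndef] at hlt
        omega
      exact Or.inr ⟨h2, by rw [← Option.some_inj.mp hz], hk1, h1⟩
  have hp : ∀ a, ∀ x y z, p a x = some z → p a y = some z → x = y := by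
    intro a x y z hx hy
    rcases hchar a x z hx with ⟨hx1, hx2, hx3⟩ | ⟨hx2, hx3, hx4, hx5⟩ <;>
      rcases hchar a y z hy with ⟨hy1, hy2, hy3⟩ | ⟨hy2, hy3, hy4, hy5⟩
    · exact Fin.ext (by omega)
    · -- x true branch, y false branch : y = x + 2, cancellation
      exfalso
      have hyx : y.val = x.val + 2 := by omega
      have hidx : n - y.val + 1 = n - 1 - x.val := by
        obtain ⟨hlt, -⟩ := List.getElem?_eq_some_iff.mp hy2
        rw [← hndef] at hlt
        omega
      exact toWord_no_cancel g (i := n - y.val) hy2 (by rw [hidx]; exact hx2)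
    · exfalso
      have hxy : x.val = y.val + 2 := by omega
      have hidx : n - x.val + 1 = n - 1 - y.val := by
        obtain ⟨hlt, -⟩ := List.getElem?_eq_some_iff.mp hx2
        rw [← hndef] at hlt
        omega
      exact toWord_no_cancel g (i := n - x.val) hx2 (by rw [hidx]; exact hy2)
    · -- both false branch
      exact Fin.ext (by omega)
  have hpt : ∀ a (k : Fin (n+1)) (h1 : k.val < n), w[n-1-k.val]? = some (a, true) →
      p a k = some ⟨k.val+1, by omega⟩ := by
    intro a k h1 h2
    exact dif_pos ⟨h1, h2⟩
  have hpf : ∀ a (k : Fin (n+1)), ¬(k.val < n ∧ w[n-1-k.val]? = some (a, true)) →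
      w[n-k.val]? = some (a, false) → p a k = some ⟨k.val-1, by omega⟩ := by
    intro a k h1 h2
    show (if h : k.val < n ∧ w[n-1-k.val]? = some (a, true) then _ else _) = _
    rw [dif_neg h1, if_pos h2]
  choose σ hσ using fun a => exists_perm_of_partial (p a) (hp a)
  set φ : FreeGroup α →* Equiv.Perm (Fin (n+1)) := FreeGroup.lift σ with hφdef
  -- key evaluation
  have key : ∀ (l₂ l₁ : List (α × Bool)), w = l₁ ++ l₂ → ∀ (hb : l₂.length < n+1),
      ((l₂.map fun c => cond c.2 (σ c.1) (σ c.1)⁻¹).prod) ⟨0, Nat.succ_pos n⟩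
        = ⟨l₂.length, hb⟩ := by
    intro l₂
    induction l₂ with
    | nil => intro l₁ _ _; rfl
    | cons c t ih =>
      intro l₁ hw hb
      have hw' : w = (l₁ ++ [c]) ++ t := by rw [hw]; simp
      have hlen : n = l₁.length + 1 + t.length := by
        rw [hndef, hw]; simp; omega
      have hbt : t.length < n+1 := by omega
      have hct : w[l₁.length]? = some c := by
        rw [hw]
        rw [List.getElem?_append_right (le_refl _)]
        simp
      rw [List.map_cons, List.prod_cons, Equiv.Perm.mul_apply, ih (l₁ ++ [c]) hw' hbt]
      have hi : n - 1 - t.length = l₁.length := by omega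
      rcases hc2 : c.2 with _ | _
      · -- c.2 = false : need (σ c.1)⁻¹ ⟨t.length⟩ = ⟨(c::t).length⟩
        have hc : c = (c.1, false) := by rw [← hc2]
        simp only [cond_false]
        rw [Equiv.Perm.inv_def, Equiv.symm_apply_eq]
        refine (hσ c.1 ⟨(c :: t).length, hb⟩ ⟨t.length, hbt⟩ ?_).symm
        have hfail : ¬((⟨(c :: t).length, hb⟩ : Fin (n+1)).val < n ∧
            w[n-1-(⟨(c :: t).length, hb⟩ : Fin (n+1)).val]? = some (c.1, true)) := by
          show ¬(t.length + 1 < n ∧ w[n-1-(t.length+1)]? = some (c.1, true))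
          rintro ⟨hlt, hcan⟩
          have hidx : (n - 1 - (t.length + 1)) + 1 = l₁.length := by omega
          refine toWord_no_cancel g (i := n-1-(t.length+1)) hcan ?_
          rw [hidx, hct, hc]
          rfl
        have h2' : w[n-(⟨(c :: t).length, hb⟩ : Fin (n+1)).val]? = some (c.1, false) := by
          show w[n-(t.length+1)]? = some (c.1, false)
          rw [show n - (t.length + 1) = l₁.length by omega, hct, hc]
        exact hpf c.1 ⟨(c :: t).length, hb⟩ hfail h2'
      · -- c.2 = true : need σ c.1 ⟨t.length⟩ = ⟨(c::t).length⟩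
        have hc : c = (c.1, true) := by rw [← hc2]
        simp only [cond_true]
        refine hσ c.1 ⟨t.length, hbt⟩ ⟨(c :: t).length, hb⟩ ?_
        have h1' : (⟨t.length, hbt⟩ : Fin (n+1)).val < n := by
          show t.length < n; omega
        have h2' : w[n-1-(⟨t.length, hbt⟩ : Fin (n+1)).val]? = some (c.1, true) := by
          show w[n-1-t.length]? = some (c.1, true)
          rw [hi, hct, hc]
        exact hpt c.1 ⟨t.length, hbt⟩ h1' h2'
  refine ⟨n+1, φ, fun h1 => ?_⟩
  have hg0 : φ g ⟨0, Nat.succ_pos n⟩ = ⟨n, by omega⟩ := by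
    have : g = FreeGroup.mk w := FreeGroup.mk_toWord.symm
    rw [hφdef, show FreeGroup.lift σ g = FreeGroup.lift σ (FreeGroup.mk w) from congrArg _ this,
      FreeGroup.lift_mk]
    exact key w [] rfl (by omega)
  rw [h1] at hg0
  simp only [Equiv.Perm.one_apply] at hg0
  exact absurd (congrArg Fin.val hg0) (by simp; omega)

/-- Free groups of rank 2 are Hopfian: every surjective endomorphism of the free
group on two generators is an isomorphism (i.e. bijective). -/
theorem freeGroup_two_hopfian
    (f : FreeGroup (Fin 2) →* FreeGroup (Fin 2))
    (hf : Function.Surjective f) : Function.Bijective f := by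
  refine ⟨?_, hf⟩
  rw [injective_iff_map_eq_one f]
  intro g hg1
  by_contra hg
  obtain ⟨m, φ, hφ⟩ := freeGroup_residually_finite g hg
  letI : Fintype (FreeGroup (Fin 2) →* Equiv.Perm (Fin m)) :=
    Fintype.ofEquiv (Fin 2 → Equiv.Perm (Fin m)) FreeGroup.lift
  have hinj : Function.Injective
      fun ψ : FreeGroup (Fin 2) →* Equiv.Perm (Fin m) => ψ.comp f := by
    intro ψ₁ ψ₂ h
    apply MonoidHom.ext
    intro x
    obtain ⟨y, rfl⟩ := hf x
    exact DFunLike.congr_fun h y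
  obtain ⟨ψ, hψ⟩ := Finite.injective_iff_surjective.mp hinj φ
  have h1 : φ g = 1 := by
    rw [← hψ]
    show ψ (f g) = 1
    rw [hg1, map_one]
  exact hφ h1
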